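/- Let Ω be a finite probability space, let G, Y be discrete random variables with values in finite types, let β ∈ [0,1], and let G_S range over deterministic functions of G. If G_S* is a deterministic function of G satisfying (1 − β)·I(G ; Y | G_S*) + β·I(G ; G_S* | Y) = 0, then for every deterministic function G_S of G, I(G_S ; Y) − β·I(G_S ; G) ≤ I(G_S* ; Y) − β·I(G_S* ; G); that is, any G_S* attaining the lower bound 0 of the nonnegative quantity (1 − β)·I(G ; Y | G_S) + β·I(G ; G_S | Y) maximizes the GIB objective. -/

import Mathlib

open Finset

variable {Ω : Type*} [Fintype Ω]

/-- The probability mass function of a random variable `X : Ω → α` on a finite sample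
space `Ω` weighted by `μ`. -/
noncomputable def pmfOf {α : Type*} [DecidableEq α] (μ : Ω → ℝ) (X : Ω → α) (a : α) : ℝ :=
  ∑ ω, if X ω = a then μ ω else 0

/-- `μ` is a probability mass function on the finite sample space `Ω`. -/
def IsPMF (μ : Ω → ℝ) : Prop := (∀ ω, 0 ≤ μ ω) ∧ ∑ ω, μ ω = 1

/-- Shannon entropy (natural logarithm) of a discrete random variable `X`:
`H(X) = -∑_a P(X = a) log P(X = a)`, written as a sum over the sample space. -/
noncomputable def entropy {α : Type*} [DecidableEq α] (μ : Ω → ℝ) (X : Ω → α) : ℝ :=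
  -∑ ω, μ ω * Real.log (pmfOf μ X (X ω))

/-- Shannon mutual information `I(X ; Y) = H(X) + H(Y) - H(X, Y)`. -/
noncomputable def mutualInfo {α β : Type*} [DecidableEq α] [DecidableEq β]
    (μ : Ω → ℝ) (X : Ω → α) (Y : Ω → β) : ℝ :=
  entropy μ X + entropy μ Y - entropy μ (fun ω => (X ω, Y ω))

/-- Conditional mutual information
`I(X ; Z ∣ W) = H(X, W) + H(Z, W) - H(X, Z, W) - H(W)`. -/
noncomputable def condMutualInfo {α β γ : Type*} [DecidableEq α] [DecidableEq β] [DecidableEq γ]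
    (μ : Ω → ℝ) (X : Ω → α) (Z : Ω → β) (W : Ω → γ) : ℝ :=
  entropy μ (fun ω => (X ω, W ω)) + entropy μ (fun ω => (Z ω, W ω))
    - entropy μ (fun ω => (X ω, Z ω, W ω)) - entropy μ W

lemma pmf_nonneg {α : Type*} [DecidableEq α] {μ : Ω → ℝ} (hμ : ∀ ω, 0 ≤ μ ω)
    (X : Ω → α) (a : α) : 0 ≤ pmfOf μ X a :=
  Finset.sum_nonneg fun ω _ => by split <;> simp [hμ ω]

lemma pmf_self_le {α : Type*} [DecidableEq α] {μ : Ω → ℝ} (hμ : ∀ ω, 0 ≤ μ ω)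
    (X : Ω → α) (ω : Ω) : μ ω ≤ pmfOf μ X (X ω) := by
  classical
  unfold pmfOf
  have := Finset.single_le_sum (f := fun ω' => if X ω' = X ω then μ ω' else 0)
    (fun i _ => by split <;> simp [hμ i]) (Finset.mem_univ ω)
  simpa using this

lemma pmf_sum_eq_one {α : Type*} [Fintype α] [DecidableEq α] {μ : Ω → ℝ} (hμ : IsPMF μ)
    (X : Ω → α) : ∑ a, pmfOf μ X a = 1 := by
  unfold pmfOf
  rw [Finset.sum_comm]
  simp [hμ.2]

lemma pmf_marginal {α γ : Type*} [Fintype α] [DecidableEq α] [DecidableEq γ] (μ : Ω → ℝ)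
    (X : Ω → α) (W : Ω → γ) (w : γ) :
    ∑ a, pmfOf μ (fun ω => (X ω, W ω)) (a, w) = pmfOf μ W w := by
  unfold pmfOf
  rw [Finset.sum_comm]
  refine Finset.sum_congr rfl fun ω _ => ?_
  by_cases h : W ω = w <;> simp [Prod.ext_iff, h]

lemma pmf_comp_inj {α β : Type*} [DecidableEq α] [DecidableEq β] (μ : Ω → ℝ)
    {e : α → β} (he : Function.Injective e) (X : Ω → α) (a : α) :
    pmfOf μ (fun ω => e (X ω)) (e a) = pmfOf μ X a := by
  unfold pmfOf
  exact Finset.sum_congr rfl fun ω _ => by simp [he.eq_iff]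

lemma entropy_comp_inj {α β : Type*} [DecidableEq α] [DecidableEq β] (μ : Ω → ℝ)
    {e : α → β} (he : Function.Injective e) (X : Ω → α) :
    entropy μ (fun ω => e (X ω)) = entropy μ X := by
  unfold entropy
  congr 1
  exact Finset.sum_congr rfl fun ω _ => by rw [pmf_comp_inj μ he X (X ω)]


lemma condMutualInfo_nonneg {α β γ : Type*} [Fintype α] [Fintype β] [Fintype γ]
    [DecidableEq α] [DecidableEq β] [DecidableEq γ]
    (μ : Ω → ℝ) (hμ : IsPMF μ) (X : Ω → α) (Z : Ω → β) (W : Ω → γ) :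
    0 ≤ condMutualInfo μ X Z W := by
  classical
  obtain ⟨h0, h1⟩ := hμ
  set pXW := pmfOf μ (fun ω => (X ω, W ω)) with hpXW
  set pZW := pmfOf μ (fun ω => (Z ω, W ω)) with hpZW
  set pT := pmfOf μ (fun ω => (X ω, Z ω, W ω)) with hpT
  set pW := pmfOf μ W with hpW
  set g : α × β × γ → ℝ := fun t => pXW (t.1, t.2.2) * pZW (t.2.1, t.2.2) / (pT t * pW t.2.2)
    with hg
  have hCMI : condMutualInfo μ X Z W
      = ∑ ω, μ ω * (Real.log (pT (X ω, Z ω, W ω)) + Real.log (pW (W ω))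
          - Real.log (pXW (X ω, W ω)) - Real.log (pZW (Z ω, W ω))) := by
    simp only [condMutualInfo, entropy, ← hpXW, ← hpZW, ← hpT, ← hpW, mul_add, mul_sub,
      Finset.sum_add_distrib, Finset.sum_sub_distrib]
    ring
  have key : ∀ ω, μ ω * (1 - g (X ω, Z ω, W ω))
      ≤ μ ω * (Real.log (pT (X ω, Z ω, W ω)) + Real.log (pW (W ω))
          - Real.log (pXW (X ω, W ω)) - Real.log (pZW (Z ω, W ω))) := by
    intro ω
    rcases eq_or_lt_of_le (h0 ω) with h | h
    · simp [← h]
    · have hT : 0 < pT (X ω, Z ω, W ω) := lt_of_lt_of_le h (pmf_self_le h0 _ ω)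
      have hW : 0 < pW (W ω) := lt_of_lt_of_le h (pmf_self_le h0 W ω)
      have hXW : 0 < pXW (X ω, W ω) := lt_of_lt_of_le h (pmf_self_le h0 _ ω)
      have hZW : 0 < pZW (Z ω, W ω) := lt_of_lt_of_le h (pmf_self_le h0 _ ω)
      have hgpos : 0 < g (X ω, Z ω, W ω) := by
        apply div_pos (mul_pos hXW hZW) (mul_pos hT hW)
      have hlog : Real.log (g (X ω, Z ω, W ω))
          = Real.log (pXW (X ω, W ω)) + Real.log (pZW (Z ω, W ω))
            - (Real.log (pT (X ω, Z ω, W ω)) + Real.log (pW (W ω))) := by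
        rw [hg]
        dsimp only
        rw [Real.log_div (by positivity) (by positivity),
          Real.log_mul (ne_of_gt hXW) (ne_of_gt hZW),
          Real.log_mul (ne_of_gt hT) (ne_of_gt hW)]
      have hb := Real.log_le_sub_one_of_pos hgpos
      have : 1 - g (X ω, Z ω, W ω) ≤ Real.log (pT (X ω, Z ω, W ω)) + Real.log (pW (W ω))
          - Real.log (pXW (X ω, W ω)) - Real.log (pZW (Z ω, W ω)) := by
        linarith [hlog ▸ hb]
      exact mul_le_mul_of_nonneg_left this (le_of_lt h)
  have hsum : ∑ ω, μ ω * g (X ω, Z ω, W ω) ≤ 1 := by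
    have step1 : ∑ ω, μ ω * g (X ω, Z ω, W ω) = ∑ t : α × β × γ, pT t * g t := by
      have e : ∀ ω, μ ω * g (X ω, Z ω, W ω)
          = ∑ t : α × β × γ, (if (X ω, Z ω, W ω) = t then μ ω else 0) * g t := by
        intro ω
        simp only [ite_mul, zero_mul, Finset.sum_ite_eq, Finset.mem_univ, if_true]
      rw [Finset.sum_congr rfl fun ω _ => e ω, Finset.sum_comm]
      refine Finset.sum_congr rfl fun t _ => ?_
      rw [hpT]
      simp only [pmfOf]
      rw [Finset.sum_mul]
    rw [step1]
    have step2 : ∑ t : α × β × γ, pT t * g t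
        ≤ ∑ t : α × β × γ, pXW (t.1, t.2.2) * pZW (t.2.1, t.2.2) / pW t.2.2 := by
      refine Finset.sum_le_sum fun t _ => ?_
      rcases eq_or_ne (pT t) 0 with h | h
      · rw [h, zero_mul]
        exact div_nonneg (mul_nonneg (pmf_nonneg h0 _ _) (pmf_nonneg h0 _ _)) (pmf_nonneg h0 _ _)
      · rcases eq_or_ne (pW t.2.2) 0 with hw | hw
        · rw [hg]; dsimp only; rw [hw]; simp
        · rw [hg]; dsimp only
          rw [show pT t * (pXW (t.1, t.2.2) * pZW (t.2.1, t.2.2) / (pT t * pW t.2.2))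
              = pXW (t.1, t.2.2) * pZW (t.2.1, t.2.2) / pW t.2.2 by field_simp]
    refine step2.trans ?_
    have swap1 : ∀ (f : α → β → γ → ℝ),
        ∑ a, ∑ b, ∑ c, f a b c = ∑ c, ∑ a, ∑ b, f a b c := by
      intro f
      calc ∑ a, ∑ b, ∑ c, f a b c
          = ∑ a, ∑ c, ∑ b, f a b c :=
            Finset.sum_congr rfl fun a _ => Finset.sum_comm
        _ = ∑ c, ∑ a, ∑ b, f a b c := Finset.sum_comm
    have e2 : ∑ t : α × β × γ, pXW (t.1, t.2.2) * pZW (t.2.1, t.2.2) / pW t.2.2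
        = ∑ c : γ, (∑ a : α, pXW (a, c)) * (∑ b : β, pZW (b, c)) / pW c := by
      rw [Fintype.sum_prod_type]
      simp only [Fintype.sum_prod_type]
      rw [swap1 (fun a b c => pXW (a, c) * pZW (b, c) / pW c)]
      refine Finset.sum_congr rfl fun c _ => ?_
      rw [Finset.sum_mul, Finset.sum_div]
      refine Finset.sum_congr rfl fun a _ => ?_
      rw [Finset.mul_sum, Finset.sum_div]
    rw [e2]
    have e3 : ∀ c : γ, (∑ a : α, pXW (a, c)) * (∑ b : β, pZW (b, c)) / pW c ≤ pW c := by
      intro c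
      rw [hpXW, pmf_marginal μ X W c, hpZW, pmf_marginal μ Z W c, ← hpW]
      rcases eq_or_ne (pW c) 0 with h | h
      · simp [h]
      · rw [mul_div_assoc, div_self h, mul_one]
    calc ∑ c : γ, (∑ a : α, pXW (a, c)) * (∑ b : β, pZW (b, c)) / pW c
        ≤ ∑ c : γ, pW c := Finset.sum_le_sum fun c _ => e3 c
      _ = 1 := by rw [hpW]; exact pmf_sum_eq_one ⟨h0, h1⟩ W
  rw [hCMI]
  calc (0:ℝ) ≤ ∑ ω, μ ω * (1 - g (X ω, Z ω, W ω)) := by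
        have e4 : ∑ ω, μ ω * (1 - g (X ω, Z ω, W ω))
            = 1 - ∑ ω, μ ω * g (X ω, Z ω, W ω) := by
          simp only [mul_sub, mul_one, Finset.sum_sub_distrib, h1]
        rw [e4]
        linarith [hsum]
    _ ≤ _ := Finset.sum_le_sum fun ω _ => key ω


lemma gib_decomp {𝒢 𝒴 𝒮' : Type*} [DecidableEq 𝒢] [DecidableEq 𝒴] [DecidableEq 𝒮']
    (μ : Ω → ℝ) (G : Ω → 𝒢) (Y : Ω → 𝒴) (β : ℝ) (φ : 𝒢 → 𝒮') :
    mutualInfo μ (fun ω => φ (G ω)) Y - β * mutualInfo μ (fun ω => φ (G ω)) G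
      = (1 - β) * mutualInfo μ Y G
        - ((1 - β) * condMutualInfo μ G Y (fun ω => φ (G ω))
            + β * condMutualInfo μ G (fun ω => φ (G ω)) Y) := by
  have E1 : entropy μ (fun ω => (φ (G ω), G ω)) = entropy μ G := by
    have := entropy_comp_inj μ (e := fun g : 𝒢 => (φ g, g))
      (fun a b h => congrArg Prod.snd h) G
    simpa using this
  have E2 : entropy μ (fun ω => (Y ω, G ω)) = entropy μ (fun ω => (G ω, Y ω)) := by
    have := entropy_comp_inj μ (e := Prod.swap (α := 𝒢) (β := 𝒴))
      Prod.swap_injective (fun ω => (G ω, Y ω))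
    simpa using this
  have E3 : entropy μ (fun ω => (G ω, φ (G ω))) = entropy μ G := by
    have := entropy_comp_inj μ (e := fun g : 𝒢 => (g, φ g))
      (fun a b h => congrArg Prod.fst h) G
    simpa using this
  have E4 : entropy μ (fun ω => (Y ω, φ (G ω)))
      = entropy μ (fun ω => (φ (G ω), Y ω)) := by
    have := entropy_comp_inj μ (e := Prod.swap (α := 𝒮') (β := 𝒴))
      Prod.swap_injective (fun ω => (φ (G ω), Y ω))
    simpa using this
  have E5 : entropy μ (fun ω => (G ω, Y ω, φ (G ω)))
      = entropy μ (fun ω => (G ω, Y ω)) := by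
    have := entropy_comp_inj μ (e := fun p : 𝒢 × 𝒴 => (p.1, p.2, φ p.1))
      (fun a b h => by
        rw [Prod.mk.injEq, Prod.mk.injEq] at h
        exact Prod.ext h.1 h.2.1)
      (fun ω => (G ω, Y ω))
    simpa using this
  have E6 : entropy μ (fun ω => (G ω, φ (G ω), Y ω))
      = entropy μ (fun ω => (G ω, Y ω)) := by
    have := entropy_comp_inj μ (e := fun p : 𝒢 × 𝒴 => (p.1, φ p.1, p.2))
      (fun a b h => by
        rw [Prod.mk.injEq, Prod.mk.injEq] at h
        exact Prod.ext h.1 h.2.2)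
      (fun ω => (G ω, Y ω))
    simpa using this
  simp only [mutualInfo, condMutualInfo, E1, E2, E3, E4, E5, E6]
  ring

/-- Any deterministic subgraph `G_S* = φ*(G)` attaining the lower bound `0` of the
nonnegative quantity `(1 - β) I(G ; Y ∣ G_S) + β I(G ; G_S ∣ Y)` maximizes the GIB
objective `I(G_S ; Y) - β I(G_S ; G)` over deterministic functions `G_S` of `G`. -/
theorem gib_maximizer_of_attains_zero
    {𝒢 𝒴 𝒮 : Type*} [Fintype 𝒢] [Fintype 𝒴] [Fintype 𝒮]
    [DecidableEq 𝒢] [DecidableEq 𝒴] [DecidableEq 𝒮]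
    (μ : Ω → ℝ) (hμ : IsPMF μ) (G : Ω → 𝒢) (Y : Ω → 𝒴)
    (β : ℝ) (hβ : β ∈ Set.Icc (0 : ℝ) 1)
    (φStar : 𝒢 → 𝒮)
    (hopt : (1 - β) * condMutualInfo μ G Y (fun ω => φStar (G ω))
        + β * condMutualInfo μ G (fun ω => φStar (G ω)) Y = 0) :
    ∀ {𝒮' : Type*} [Fintype 𝒮'] [DecidableEq 𝒮'] (φ : 𝒢 → 𝒮'),
      mutualInfo μ (fun ω => φ (G ω)) Y - β * mutualInfo μ (fun ω => φ (G ω)) G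
        ≤ mutualInfo μ (fun ω => φStar (G ω)) Y
            - β * mutualInfo μ (fun ω => φStar (G ω)) G := by
  intro 𝒮' _ _ φ
  obtain ⟨hβ0, hβ1⟩ := hβ
  have hC1 : 0 ≤ condMutualInfo μ G Y (fun ω => φ (G ω)) :=
    condMutualInfo_nonneg μ hμ _ _ _
  have hC2 : 0 ≤ condMutualInfo μ G (fun ω => φ (G ω)) Y :=
    condMutualInfo_nonneg μ hμ _ _ _
  rw [gib_decomp μ G Y β φ, gib_decomp μ G Y β φStar, hopt]
  have h1 : 0 ≤ (1 - β) * condMutualInfo μ G Y (fun ω => φ (G ω)) :=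
    mul_nonneg (by linarith) hC1
  have h2 : 0 ≤ β * condMutualInfo μ G (fun ω => φ (G ω)) Y :=
    mul_nonneg hβ0 hC2
  linarith
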